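/- Let X_n be the free monoid on letters x_1, x_1^{-1}, ..., x_n, x_n^{-1}, R_n : X_{n+1} → X_n the map deleting all occurrences of x_{n+1}, x_{n+1}^{-1}, and X_∞ = lim← X_n. For each g in the quotient G of X_∞ (identifying words whose images in each free group G_n agree), the sequence σ_n(Π_n(g)) of maximally reduced representatives converges in X_∞; i.e., for each N, R_N(σ_n(Π_n(g))) is eventually constant in n. -/

import Mathlib

open Filter Topology

/-- Words: finite unreduced words in the letters `x_{i+1}^{±1}`, a letter being
a pair `(i, b)` with `b` recording the sign. -/
instance : TopologicalSpace (List (ℕ × Bool)) := ⊥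

instance : DiscreteTopology (List (ℕ × Bool)) := ⟨rfl⟩

/-- `X_∞ = lim← Xₙ`, where `Xₙ` is the discrete free monoid on the letters
`x_1^{±1}, ..., x_n^{±1}` (letters of index `< n`) and the bonding retraction
`Rₙ : X_{n+1} → Xₙ` deletes all occurrences of the top generator pair. -/
def Xinf : Type :=
  {x : ℕ → List (ℕ × Bool) //
    (∀ n, ∀ l ∈ x n, l.1 < n) ∧
    ∀ n, (x (n + 1)).filter (fun l => decide (l.1 < n)) = x n}

instance : TopologicalSpace Xinf :=
  inferInstanceAs (TopologicalSpace
    {x : ℕ → List (ℕ × Bool) //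
      (∀ n, ∀ l ∈ x n, l.1 < n) ∧
      ∀ n, (x (n + 1)).filter (fun l => decide (l.1 < n)) = x n})

namespace Stmt17Aux

open FreeGroup

variable {N : ℕ}

abbrev P (N : ℕ) : ℕ × Bool → Bool := fun l => decide (l.1 < N)

lemma step_cases {L L' : List (ℕ × Bool)} (h : FreeGroup.Red.Step L L') :
    (L'.countP (P N) = L.countP (P N) ∧ L'.filter (P N) = L.filter (P N)) ∨
      L'.countP (P N) + 2 = L.countP (P N) := by
  cases h with
  | @not L₁ L₂ i b =>
    by_cases hi : i < N
    · right
      simp [List.countP_append, List.countP_cons, P, hi]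
      omega
    · left
      refine ⟨?_, ?_⟩ <;>
        simp [List.countP_append, List.countP_cons, List.filter_append, P, hi]

lemma red_countP_le {L L' : List (ℕ × Bool)} (h : FreeGroup.Red L L') :
    L'.countP (P N) ≤ L.countP (P N) := by
  induction h with
  | refl => exact le_refl _
  | tail _ hstep ih =>
    rcases step_cases (N := N) hstep with ⟨hc, _⟩ | hc <;> omega

lemma red_filter_eq {L L' : List (ℕ × Bool)} (h : FreeGroup.Red L L')
    (hc : L'.countP (P N) = L.countP (P N)) :
    L'.filter (P N) = L.filter (P N) := by
  induction h with
  | refl => rfl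
  | @tail B C hred hstep ih =>
    have h1 : B.countP (P N) ≤ L.countP (P N) := red_countP_le hred
    rcases step_cases (N := N) hstep with ⟨hc', hf⟩ | hc'
    · rw [hf, ih (by omega)]
    · omega

lemma mk_single_false (i : ℕ) : FreeGroup.mk [(i, false)] = (FreeGroup.of i)⁻¹ := by
  rw [show FreeGroup.of i = FreeGroup.mk [(i, true)] from rfl, FreeGroup.inv_mk]
  rfl

lemma lift_single (m i : ℕ) (b : Bool) :
    (FreeGroup.lift (fun i => if i < m then FreeGroup.of i else 1)) (FreeGroup.mk [(i, b)]) =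
      if i < m then FreeGroup.mk [(i, b)] else 1 := by
  cases b
  · rw [mk_single_false, MonoidHom.map_inv, FreeGroup.lift_apply_of]
    by_cases hi : i < m
    · rw [if_pos hi, if_pos hi]
    · rw [if_neg hi, if_neg hi, inv_one]
  · rw [show FreeGroup.mk [(i, true)] = FreeGroup.of i from rfl, FreeGroup.lift_apply_of]

lemma mk_filter (m : ℕ) (L : List (ℕ × Bool)) :
    FreeGroup.mk (L.filter (fun l => decide (l.1 < m))) =
      (FreeGroup.lift (fun i => if i < m then FreeGroup.of i else 1)) (FreeGroup.mk L) := by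
  induction L with
  | nil => simp [← FreeGroup.one_eq_mk]
  | cons a L ih =>
    obtain ⟨i, b⟩ := a
    have h1 : FreeGroup.mk ((i, b) :: L) = FreeGroup.mk [(i, b)] * FreeGroup.mk L := by
      rw [FreeGroup.mul_mk]; rfl
    rw [h1, MonoidHom.map_mul, ← ih, lift_single]
    by_cases hi : i < m
    · have h2 : ((i, b) :: L).filter (fun l => decide (l.1 < m)) =
          (i, b) :: L.filter (fun l => decide (l.1 < m)) := by simp [hi]
      rw [h2, if_pos hi,
        show ((i, b) :: L.filter (fun l => decide (l.1 < m))) =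
          [(i, b)] ++ L.filter (fun l => decide (l.1 < m)) from rfl, ← FreeGroup.mul_mk]
    · have h2 : ((i, b) :: L).filter (fun l => decide (l.1 < m)) =
          L.filter (fun l => decide (l.1 < m)) := by simp [hi]
      rw [h2, if_neg hi, one_mul]

lemma mk_filter_eq {m : ℕ} {L L' : List (ℕ × Bool)} (h : FreeGroup.mk L = FreeGroup.mk L') :
    FreeGroup.mk (L.filter (fun l => decide (l.1 < m))) =
      FreeGroup.mk (L'.filter (fun l => decide (l.1 < m))) := by
  rw [mk_filter, mk_filter, h]



lemma filter_lt_absorb {N m : ℕ} (h : N ≤ m) (l : List (ℕ × Bool)) :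
    (l.filter (fun a => decide (a.1 < m))).filter (P N) = l.filter (P N) := by
  rw [List.filter_filter]
  congr 1
  funext a
  by_cases h' : a.1 < N
  · have : a.1 < m := lt_of_lt_of_le h' h
    simp [P, h', this]
  · simp [P, h']

lemma countP_lt_absorb {N m : ℕ} (h : N ≤ m) (l : List (ℕ × Bool)) :
    (l.filter (fun a => decide (a.1 < m))).countP (P N) = l.countP (P N) := by
  rw [List.countP_eq_length_filter, List.countP_eq_length_filter, filter_lt_absorb h]

lemma countP_filter_le {N : ℕ} (q : ℕ × Bool → Bool) (l : List (ℕ × Bool)) :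
    (l.filter q).countP (P N) ≤ l.countP (P N) :=
  List.filter_sublist.countP_le

end Stmt17Aux

open Stmt17Aux

/-- Claim 1 of Lemma `convcrit`: for each `g` in the quotient `G` of `X_∞`
(identifying words whose images in every free group `Gₙ` agree), the sequence
`σₙ(Πₙ(g))` of maximally reduced representatives converges in `X_∞`; i.e. for
each `N`, `R_N(σₙ(Πₙ(g)))` is eventually constant in `n`.  Here
`FreeGroup.mk (x.1 n)` is `qₙ(Rₙ(x)) = Πₙ(g)` and `.toWord` is its reduced
representative `σₙ`. -/


theorem stmt_17 (x : Xinf) (N : ℕ) :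
    ∃ M, ∀ m, M ≤ m →
      ((FreeGroup.mk (x.1 m)).toWord).filter (fun l => decide (l.1 < N)) =
      ((FreeGroup.mk (x.1 M)).toWord).filter (fun l => decide (l.1 < N)) := by
  set w : ℕ → List (ℕ × Bool) := fun m => (FreeGroup.mk (x.1 m)).toWord with hw
  set c : ℕ → ℕ := fun m => (w m).countP (P N) with hc
  -- the key reduction relation
  have key : ∀ m, FreeGroup.mk ((w (m+1)).filter (fun l => decide (l.1 < m)))
      = FreeGroup.mk (x.1 m) := by
    intro m
    have h1 : FreeGroup.mk (w (m+1)) = FreeGroup.mk (x.1 (m+1)) :=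
      FreeGroup.mk_toWord
    have := mk_filter_eq (m := m) h1
    rw [this, x.2.2 m]
  have hred : ∀ m, FreeGroup.Red ((w (m+1)).filter (fun l => decide (l.1 < m))) (w m) := by
    intro m
    have : w m = FreeGroup.reduce ((w (m+1)).filter (fun l => decide (l.1 < m))) := by
      rw [hw]
      simp only
      rw [← key m, FreeGroup.toWord_mk]
    rw [this]
    exact FreeGroup.reduce.red
  have hred0 : ∀ m, FreeGroup.Red (x.1 m) (w m) := by
    intro m
    have : w m = FreeGroup.reduce (x.1 m) := by rw [hw]; simp [FreeGroup.toWord_mk]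
    rw [this]; exact FreeGroup.reduce.red
  -- monotonicity of c
  have hmono : Monotone c := by
    apply monotone_nat_of_le_succ
    intro m
    calc c m ≤ ((w (m+1)).filter (fun l => decide (l.1 < m))).countP (P N) :=
          red_countP_le (hred m)
      _ ≤ (w (m+1)).countP (P N) := countP_filter_le _ _
  -- the chained filter condition
  have hchain : ∀ m, N ≤ m → (x.1 m).filter (P N) = x.1 N := by
    intro m hm
    induction m with
    | zero => have : N = 0 := Nat.le_zero.mp hm; subst this
              exact List.filter_eq_self.mpr (fun a ha => by simpa [P] using x.2.1 0 a ha)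
    | succ k ih =>
      rcases Nat.lt_or_ge N (k+1) with h | h
      · have hk : N ≤ k := Nat.lt_succ_iff.mp h
        rw [← ih hk, ← x.2.2 k, filter_lt_absorb hk]
      · have : N = k + 1 := le_antisymm hm h
        subst this
        exact List.filter_eq_self.mpr (fun a ha => by simpa [P] using x.2.1 (k+1) a ha)
  -- boundedness of c
  have hub : ∀ m, c m ≤ (x.1 N).length := by
    have hge : ∀ m, N ≤ m → c m ≤ (x.1 N).length := by
      intro m hm
      calc c m ≤ (x.1 m).countP (P N) := red_countP_le (hred0 m)
        _ = ((x.1 m).filter (P N)).length := List.countP_eq_length_filter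
        _ = (x.1 N).length := by rw [hchain m hm]
    intro m
    rcases le_or_gt N m with h | h
    · exact hge m h
    · exact le_trans (hmono h.le) (hge N le_rfl)
  -- c attains its supremum
  obtain ⟨M₀, hM₀⟩ : ∃ M₀, c M₀ = sSup (Set.range c) := by
    have h1 : (Set.range c).Nonempty := ⟨c 0, 0, rfl⟩
    have h2 : BddAbove (Set.range c) := ⟨(x.1 N).length, by rintro _ ⟨m, rfl⟩; exact hub m⟩
    obtain ⟨M₀, hM₀⟩ := Nat.sSup_mem h1 h2
    exact ⟨M₀, hM₀⟩
  have hbdd : BddAbove (Set.range c) := ⟨(x.1 N).length, by rintro _ ⟨m, rfl⟩; exact hub m⟩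
  refine ⟨max M₀ N, ?_⟩
  have hconst : ∀ m, max M₀ N ≤ m → c m = c M₀ := by
    intro m hm
    have h1 : c M₀ ≤ c m := hmono (le_trans (le_max_left _ _) hm)
    have h2 : c m ≤ c M₀ := hM₀ ▸ le_csSup hbdd ⟨m, rfl⟩
    omega
  intro m hm
  induction m, hm using Nat.le_induction with
  | base => rfl
  | succ m hm ih =>
    rw [← ih]
    have hNm : N ≤ m := le_trans (le_max_right _ _) hm
    have hcount : (w m).countP (P N)
        = ((w (m+1)).filter (fun l => decide (l.1 < m))).countP (P N) := by
      rw [countP_lt_absorb hNm]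
      have e1 : c m = c M₀ := hconst m hm
      have e2 : c (m+1) = c M₀ := hconst (m+1) (le_trans hm (Nat.le_succ m))
      show c m = c (m+1)
      omega
    have := red_filter_eq (hred m) hcount
    show (w (m+1)).filter (P N) = (w m).filter (P N)
    rw [this, filter_lt_absorb hNm]
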